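/- arXiv:1101.1688 — 6 statements merged into one kernel-verified Lean document; each statement's English description precedes it below -/
import Mathlib

section
/- For all real h with h ≠ 0 and any real g, the rate R = max(0, (1/2)·log₂((1+h²+g²)·h²/(h²+g²))) satisfies R ≥ max(0, (1/2)·log₂(h²)), and moreover (1/2)·log₂(1+h²) − R ≤ 1/2. That is, the dirty-paper achievable rate obtained from the auxiliary variable U = hX + gS is within half a bit of the capacity (1/2)·log₂(1+h²). -/
theorem stmt_0 (h g : ℝ) (hh : h ≠ 0) :
    max 0 ((1/2) * Real.logb 2 ((1 + h^2 + g^2) * h^2 / (h^2 + g^2)))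
      ≥ max 0 ((1/2) * Real.logb 2 (h^2)) ∧
    (1/2) * Real.logb 2 (1 + h^2)
      - max 0 ((1/2) * Real.logb 2 ((1 + h^2 + g^2) * h^2 / (h^2 + g^2))) ≤ 1/2 := by
  have hb : (1:ℝ) < 2 := one_lt_two
  have hs : (0:ℝ) < h^2 := by positivity
  have hd : (0:ℝ) < h^2 + g^2 := by positivity
  have hN : (0:ℝ) < (1 + h^2 + g^2) * h^2 := by positivity
  have hA : (0:ℝ) < (1 + h^2 + g^2) * h^2 / (h^2 + g^2) := by positivity
  have hle : h^2 ≤ (1 + h^2 + g^2) * h^2 / (h^2 + g^2) := by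
    rw [le_div_iff₀ hd]; nlinarith [sq_nonneg g]
  constructor
  · exact max_le_max le_rfl (by
      have := (Real.logb_le_logb hb hs hA).mpr hle
      linarith)
  · rw [sub_le_iff_le_add]
    rcases le_or_gt (h^2) 1 with hc | hc
    · have h1 : Real.logb 2 (1 + h^2) ≤ Real.logb 2 2 :=
        (Real.logb_le_logb hb (by linarith) (by norm_num)).mpr (by linarith)
      rw [Real.logb_self_eq_one hb] at h1
      have := le_max_left (0:ℝ)
        ((1/2) * Real.logb 2 ((1 + h^2 + g^2) * h^2 / (h^2 + g^2)))
      linarith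
    · have key : (1 + h^2) * (h^2 + g^2) ≤ 2 * ((1 + h^2 + g^2) * h^2) := by
        nlinarith [sq_nonneg g]
      have h1 : Real.logb 2 ((1 + h^2) * (h^2 + g^2)) ≤
          Real.logb 2 (2 * ((1 + h^2 + g^2) * h^2)) :=
        (Real.logb_le_logb hb (by positivity) (by positivity)).mpr key
      rw [Real.logb_mul (by positivity) (by positivity),
          Real.logb_mul (by norm_num) (by positivity),
          Real.logb_self_eq_one hb] at h1
      have h2 : Real.logb 2 ((1 + h^2 + g^2) * h^2 / (h^2 + g^2)) =
          Real.logb 2 ((1 + h^2 + g^2) * h^2) - Real.logb 2 (h^2 + g^2) :=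
        Real.logb_div (by positivity) (by positivity)
      have h3 := le_max_right (0:ℝ)
        ((1/2) * Real.logb 2 ((1 + h^2 + g^2) * h^2 / (h^2 + g^2)))
      rw [h2] at h3 ⊢
      linarith
end

section
/- Let A and B be matrices over GF(2) with the same number of columns, and let Z be a uniformly distributed random vector over GF(2)^k (where k is the common number of columns). Then the conditional entropy H(AZ | BZ) equals rank([A; B]) − rank(B), where [A; B] denotes the vertical stack of A on top of B, and entropy is measured in bits. -/
open Finset in
/-- Shannon entropy (in bits) of the random variable `f` of a random element of `α`
distributed according to the probability mass function `p`. -/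
noncomputable def distEnt {α β : Type*} [Fintype α] [Fintype β] [DecidableEq β]
    (p : α → ℝ) (f : α → β) : ℝ :=
  -∑ b : β, (∑ z ∈ univ.filter (fun z => f z = b), p z) *
      Real.logb 2 (∑ z ∈ univ.filter (fun z => f z = b), p z)

/-- Conditional Shannon entropy (in bits) `H(f | g)` via the chain rule. -/
noncomputable def condEnt {α β γ : Type*} [Fintype α] [Fintype β] [Fintype γ]
    [DecidableEq β] [DecidableEq γ] (p : α → ℝ) (f : α → β) (g : α → γ) : ℝ :=
  distEnt p (fun z => (f z, g z)) - distEnt p g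

open Finset

lemma distEnt_comp_equiv {α β γ : Type*} [Fintype α] [Fintype β] [Fintype γ]
    [DecidableEq β] [DecidableEq γ] (p : α → ℝ) (f : α → β) (e : β ≃ γ) :
    distEnt p (fun z => e (f z)) = distEnt p f := by
  unfold distEnt
  rw [← Equiv.sum_comp e]
  congr 1
  apply Finset.sum_congr rfl
  intro b _
  have : (univ.filter (fun z => e (f z) = e b)) = (univ.filter (fun z => f z = b)) := by
    apply Finset.filter_congr
    intro z _
    simp [e.injective.eq_iff]
  rw [this]

lemma distEnt_linear {V W : Type*} [AddCommGroup V] [AddCommGroup W]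
    [Module (ZMod 2) V] [Module (ZMod 2) W] [Fintype V] [Fintype W]
    [DecidableEq V] [DecidableEq W]
    (f : V →ₗ[ZMod 2] W) :
    distEnt (fun _ : V => (1 : ℝ) / Fintype.card V) f
      = (Module.finrank (ZMod 2) (LinearMap.range f) : ℝ) := by
  classical
  set Nk : ℕ := (univ.filter (fun z : V => f z = 0)).card with hNk
  set t : Finset W := (Set.range f).toFinset with ht
  set Nr : ℕ := t.card with hNr
  have hfiber : ∀ b ∈ Set.range f, (univ.filter (fun z : V => f z = b)).card = Nk := by
    rintro b ⟨z0, rfl⟩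
    rw [hNk]
    apply Finset.card_bij' (fun z _ => z - z0) (fun y _ => y + z0)
    · intro z hz
      simp only [mem_filter, mem_univ, true_and] at hz ⊢
      rw [map_sub, hz, sub_self]
    · intro y hy
      simp only [mem_filter, mem_univ, true_and] at hy ⊢
      rw [map_add, hy, zero_add]
    · intro z _; simp
    · intro y _; simp
  have hNk_pos : 0 < Nk := by
    rw [hNk]
    apply Finset.card_pos.2
    exact ⟨0, by simp⟩
  have hNr_pos : 0 < Nr := by
    rw [hNr, ht]
    apply Finset.card_pos.2
    exact ⟨0, by simp [Set.mem_toFinset]; exact ⟨0, map_zero f⟩⟩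
  have hcardV : Fintype.card V = Nr * Nk := by
    rw [← Finset.card_univ, Finset.card_eq_sum_card_fiberwise
      (f := f) (t := t) (fun x _ => by rw [ht, Set.coe_toFinset]; exact ⟨x, rfl⟩)]
    rw [Finset.sum_congr rfl (fun b hb => hfiber b (by rwa [ht, Set.mem_toFinset] at hb)),
      Finset.sum_const, smul_eq_mul]
  have hF : ∀ b : W, (∑ z ∈ univ.filter (fun z : V => f z = b), (1 : ℝ) / Fintype.card V)
      = if b ∈ t then (1 : ℝ) / Nr else 0 := by
    intro b
    rw [Finset.sum_const, nsmul_eq_mul]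
    by_cases hb : b ∈ t
    · rw [if_pos hb, hfiber b (by rwa [ht, Set.mem_toFinset] at hb), hcardV]
      push_cast
      rw [mul_one_div]
      have hNkR : (Nk : ℝ) ≠ 0 := by exact_mod_cast hNk_pos.ne'
      have hNrR : (Nr : ℝ) ≠ 0 := by exact_mod_cast hNr_pos.ne'
      field_simp
    · rw [if_neg hb]
      have : (univ.filter (fun z : V => f z = b)) = ∅ := by
        apply Finset.filter_false_of_mem
        intro z _
        intro h
        exact hb (by rw [ht, Set.mem_toFinset]; exact ⟨z, h⟩)
      rw [this]
      simp
  have hNrR : (0 : ℝ) < Nr := by exact_mod_cast hNr_pos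
  unfold distEnt
  have : ∀ b : W, (∑ z ∈ univ.filter (fun z : V => f z = b), (1 : ℝ) / Fintype.card V) *
      Real.logb 2 (∑ z ∈ univ.filter (fun z : V => f z = b), (1 : ℝ) / Fintype.card V)
      = if b ∈ t then (1 / Nr) * Real.logb 2 (1 / Nr) else 0 := by
    intro b
    rw [hF b]
    by_cases hb : b ∈ t <;> simp [hb]
  rw [Finset.sum_congr rfl (fun b _ => this b), Finset.sum_ite_mem, Finset.univ_inter,
    Finset.sum_const, nsmul_eq_mul]
  have hlog : Real.logb 2 ((1 : ℝ) / Nr) = -Real.logb 2 Nr := by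
    rw [one_div, Real.logb_inv]
  rw [hlog]
  have hNr_rank : (Nr : ℝ) = 2 ^ Module.finrank (ZMod 2) (LinearMap.range f) := by
    have h1 : Nr = Nat.card (LinearMap.range f) := by
      rw [hNr, ht, Set.toFinset_card, ← Nat.card_eq_fintype_card]
      exact Nat.card_congr (Equiv.setCongr (LinearMap.coe_range f).symm)
    have h2 : Nat.card (LinearMap.range f) =
        2 ^ Module.finrank (ZMod 2) (LinearMap.range f) := by
      rw [Nat.card_eq_fintype_card, Module.card_eq_pow_finrank (K := ZMod 2), ZMod.card]
    rw [h1, h2]; push_cast; ring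
  rw [hNr_rank]
  have hlb : Real.logb 2 ((2 : ℝ) ^ Module.finrank (ZMod 2) (LinearMap.range f))
      = Module.finrank (ZMod 2) (LinearMap.range f) := by
    rw [Real.logb_pow]
    simp [Real.logb_self_eq_one]
  rw [hlb, ← hNr_rank]
  have hNrR' : (Nr : ℝ) ≠ 0 := hNrR.ne'
  field_simp

/-- for `Z` uniform on `GF(2)^k`,
`H(AZ | BZ) = rank [A;B] − rank B` (in bits). -/
theorem stmt_2 {p r k : ℕ} (A : Matrix (Fin p) (Fin k) (ZMod 2))
    (B : Matrix (Fin r) (Fin k) (ZMod 2)) :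
    condEnt (fun _ : Fin k → ZMod 2 => (1 : ℝ) / Fintype.card (Fin k → ZMod 2))
        (fun z => A.mulVec z) (fun z => B.mulVec z)
      = ((Matrix.fromRows A B).rank : ℝ) - (B.rank : ℝ) := by
  classical
  unfold condEnt
  have hpair : (fun z : Fin k → ZMod 2 => (A.mulVec z, B.mulVec z))
      = fun z => Equiv.sumArrowEquivProdArrow (Fin p) (Fin r) (ZMod 2)
          ((Matrix.fromRows A B).mulVec z) := by
    funext z
    simp [Equiv.sumArrowEquivProdArrow, Matrix.fromRows_mulVec]
  rw [hpair, distEnt_comp_equiv]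
  show distEnt _ ⇑(Matrix.fromRows A B).mulVecLin - distEnt _ ⇑B.mulVecLin = _
  rw [distEnt_linear, distEnt_linear]
  rfl
end

section
/- Let A and B be matrices over GF(2) with the same number of columns k. For every GF(2)-valued random vector Z of length k, the conditional entropy H(AZ | BZ) ≤ rank([A; B]) − rank(B), with equality when Z is uniform on GF(2)^k. Hence max over all distributions of Z of H(AZ|BZ) equals rank([A; B]) − rank(B). -/
open Finset

private lemma jensen_logb {ι : Type*} (s : Finset ι) (w x : ι → ℝ)
    (hw : ∀ i ∈ s, 0 < w i) (hx : ∀ i ∈ s, 0 < x i) (hw1 : ∑ i ∈ s, w i = 1) :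
    ∑ i ∈ s, w i * Real.logb 2 (x i) ≤ Real.logb 2 (∑ i ∈ s, w i * x i) := by
  have key : ∑ i ∈ s, w i * Real.log (x i) ≤ Real.log (∑ i ∈ s, w i * x i) := by
    have := (strictConcaveOn_log_Ioi.concaveOn).le_map_sum
      (t := s) (w := w) (p := x) (fun i hi => (hw i hi).le) hw1
      (fun i hi => hx i hi)
    simpa using this
  have h2 : (0:ℝ) < Real.log 2 := Real.log_pos one_lt_two
  simp only [Real.logb, div_eq_mul_inv, ← Finset.sum_mul]
  calc (∑ i ∈ s, w i * (Real.log (x i) * (Real.log 2)⁻¹))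
      = (∑ i ∈ s, w i * Real.log (x i)) * (Real.log 2)⁻¹ := by
        simp only [← mul_assoc]; rw [← Finset.sum_mul]
    _ ≤ Real.log (∑ i ∈ s, w i * x i) * (Real.log 2)⁻¹ :=
        mul_le_mul_of_nonneg_right key (by positivity)

section Bound
variable {α β γ : Type*} [Fintype α] [Fintype β] [Fintype γ] [DecidableEq β] [DecidableEq γ]

private lemma condEnt_le_logb (p : α → ℝ) (hp : ∀ z, 0 ≤ p z) (hs : ∑ z, p z = 1)
    (f : α → β) (g : α → γ) (N : ℕ)
    (hfib : ∀ c : γ, ∃ t : Finset β, t.card ≤ N ∧ ∀ b, (∃ z, f z = b ∧ g z = c) → b ∈ t) :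
    condEnt p f g ≤ Real.logb 2 N := by
  classical
  set q : β × γ → ℝ := fun bc => ∑ z ∈ univ.filter (fun z => (f z, g z) = bc), p z with hq
  set m : γ → ℝ := fun c => ∑ z ∈ univ.filter (fun z => g z = c), p z with hm
  have hq0 : ∀ bc, 0 ≤ q bc := fun bc => Finset.sum_nonneg (fun z _ => hp z)
  have hm0 : ∀ c, 0 ≤ m c := fun c => Finset.sum_nonneg (fun z _ => hp z)
  -- marginal
  have hmarg : ∀ c, ∑ b, q (b, c) = m c := by
    intro c
    have : ∀ b : β, univ.filter (fun z => (f z, g z) = (b, c))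
        = (univ.filter (fun z => g z = c)).filter (fun z => f z = b) := by
      intro b
      ext z
      simp only [Finset.mem_filter, Finset.mem_univ, true_and, Prod.mk.injEq]
      tauto
    calc ∑ b, q (b, c)
        = ∑ b, ∑ z ∈ (univ.filter (fun z => g z = c)).filter (fun z => f z = b), p z := by
          simp only [hq, this]
      _ = ∑ z ∈ univ.filter (fun z => g z = c), p z :=
          Finset.sum_fiberwise_of_maps_to (fun z _ => Finset.mem_univ (f z)) p
  have htot : ∑ bc : β × γ, q bc = 1 := by
    rw [← hs]
    exact Finset.sum_fiberwise_of_maps_to (fun z _ => Finset.mem_univ _) p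
  -- rewrite condEnt
  have hce : condEnt p f g = ∑ bc : β × γ, q bc * (Real.logb 2 (m bc.2) - Real.logb 2 (q bc)) := by
    have h1 : distEnt p (fun z => (f z, g z)) = -∑ bc : β × γ, q bc * Real.logb 2 (q bc) := rfl
    have h2 : distEnt p g = -∑ c : γ, m c * Real.logb 2 (m c) := rfl
    have h3 : ∑ c : γ, m c * Real.logb 2 (m c) = ∑ bc : β × γ, q bc * Real.logb 2 (m bc.2) := by
      rw [Fintype.sum_prod_type_right]
      refine Finset.sum_congr rfl fun c _ => ?_
      rw [← hmarg c, Finset.sum_mul]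
      exact Finset.sum_congr rfl fun b _ => by rw [hmarg]
    rw [condEnt, h1, h2, h3, neg_sub_neg, ← Finset.sum_sub_distrib]
    exact Finset.sum_congr rfl fun bc _ => (mul_sub _ _ _).symm
  -- support
  set S : Finset (β × γ) := univ.filter (fun bc => 0 < q bc) with hS
  have hqzero : ∀ bc ∈ univ, bc ∉ S → q bc = 0 := by
    intro bc _ hbc
    simp only [hS, Finset.mem_filter, Finset.mem_univ, true_and, not_lt] at hbc
    exact le_antisymm hbc (hq0 bc)
  have hSsum : ∑ bc ∈ S, q bc = 1 := by
    rw [Finset.sum_subset (Finset.subset_univ S) hqzero]; exact htot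
  have hqm : ∀ bc : β × γ, q bc ≤ m bc.2 := by
    intro bc
    rw [← hmarg bc.2]
    simpa using Finset.single_le_sum (f := fun b => q (b, bc.2))
      (fun b _ => hq0 (b, bc.2)) (Finset.mem_univ bc.1)
  have hmpos : ∀ bc ∈ S, 0 < m bc.2 := by
    intro bc hbc
    have : 0 < q bc := (Finset.mem_filter.mp hbc).2
    exact lt_of_lt_of_le this (hqm bc)
  have hcondS : condEnt p f g = ∑ bc ∈ S, q bc * Real.logb 2 (m bc.2 / q bc) := by
    rw [hce]
    rw [← Finset.sum_subset (Finset.subset_univ S)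
      (fun bc h1 h2 => by rw [hqzero bc h1 h2]; ring)]
    refine Finset.sum_congr rfl fun bc hbc => ?_
    have hqpos : 0 < q bc := (Finset.mem_filter.mp hbc).2
    rw [Real.logb_div (ne_of_gt (hmpos bc hbc)) (ne_of_gt hqpos)]
  -- the inner sum bound
  have hsum_m : ∑ c : γ, m c = 1 := by
    rw [← hs]
    exact Finset.sum_fiberwise_of_maps_to (fun z _ => Finset.mem_univ _) p
  have hbound : ∑ bc ∈ S, m bc.2 ≤ (N : ℝ) := by
    have step1 : ∑ bc ∈ S, m bc.2
        = ∑ c : γ, ((univ.filter (fun b => 0 < q (b, c))).card : ℝ) * m c := by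
      rw [hS, Finset.sum_filter, Fintype.sum_prod_type_right]
      refine Finset.sum_congr rfl fun c _ => ?_
      rw [← Finset.sum_filter]
      have he : ∀ a ∈ univ.filter (fun a => 0 < q (a, c)), m (a, c).2 = m c := fun a _ => rfl
      rw [Finset.sum_congr rfl he, Finset.sum_const, nsmul_eq_mul]
    rw [step1]
    calc ∑ c : γ, ((univ.filter (fun b => 0 < q (b, c))).card : ℝ) * m c
        ≤ ∑ c : γ, (N : ℝ) * m c := by
          refine Finset.sum_le_sum fun c _ => ?_
          refine mul_le_mul_of_nonneg_right ?_ (hm0 c)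
          obtain ⟨t, htN, ht⟩ := hfib c
          have hsub : univ.filter (fun b => 0 < q (b, c)) ⊆ t := by
            intro b hb
            have hqpos : 0 < q (b, c) := (Finset.mem_filter.mp hb).2
            have hne : (univ.filter (fun z => (f z, g z) = (b, c))).Nonempty := by
              by_contra hcon
              rw [Finset.not_nonempty_iff_eq_empty] at hcon
              rw [hq] at hqpos
              simp only [hcon, Finset.sum_empty] at hqpos
              exact lt_irrefl 0 hqpos
            obtain ⟨z, hz⟩ := hne
            simp only [Finset.mem_filter, Finset.mem_univ, true_and, Prod.mk.injEq] at hz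
            exact ht b ⟨z, hz.1, hz.2⟩
          exact Nat.cast_le.mpr (le_trans (Finset.card_le_card hsub) htN)
      _ = (N : ℝ) := by rw [← Finset.mul_sum, hsum_m, mul_one]
  have hjen := jensen_logb S q (fun bc => m bc.2 / q bc)
    (fun bc hbc => (Finset.mem_filter.mp hbc).2)
    (fun bc hbc => div_pos (hmpos bc hbc) (Finset.mem_filter.mp hbc).2) hSsum
  have heq : ∑ bc ∈ S, q bc * (m bc.2 / q bc) = ∑ bc ∈ S, m bc.2 := by
    refine Finset.sum_congr rfl fun bc hbc => ?_
    have hqpos := (Finset.mem_filter.mp hbc).2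
    rw [mul_comm, div_mul_cancel₀ _ hqpos.ne']
  have hpos : (0:ℝ) < ∑ bc ∈ S, m bc.2 :=
    lt_of_lt_of_le one_pos (by rw [← hSsum]; exact Finset.sum_le_sum fun bc _ => hqm bc)
  rw [heq] at hjen
  rw [hcondS]
  exact le_trans hjen (Real.logb_le_logb_of_le one_lt_two hpos hbound)

end Bound

private lemma distEnt_uniform_fibers {α β : Type*} [Fintype α] [Fintype β] [DecidableEq β]
    (f : α → β) (c m : ℕ) (hc : 0 < c) (hm : 0 < m) (hcm : c * m = Fintype.card α)
    (hfib : ∀ b : β, ((univ : Finset α).filter (fun z => f z = b)).card = 0 ∨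
      ((univ : Finset α).filter (fun z => f z = b)).card = c) :
    distEnt (fun _ => (1 : ℝ) / (Fintype.card α)) f = Real.logb 2 m := by
  classical
  have hcard : (0:ℝ) < (Fintype.card α : ℝ) := by
    have : 0 < Fintype.card α := hcm ▸ Nat.mul_pos hc hm
    exact_mod_cast this
  -- probability of b
  have hP : ∀ b : β, ∑ z ∈ univ.filter (fun z => f z = b), (1 : ℝ) / (Fintype.card α)
      = ((univ.filter (fun z => f z = b)).card : ℝ) / (Fintype.card α) := by
    intro b
    rw [Finset.sum_const, nsmul_eq_mul]
    ring
  set T : Finset β := univ.filter (fun b => (univ.filter (fun z => f z = b)).card = c) with hT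
  have hTcard : T.card = m := by
    have hpart : ∑ b : β, (univ.filter (fun z => f z = b)).card = Fintype.card α := by
      rw [← Finset.card_univ]
      exact (Finset.card_eq_sum_card_fiberwise (fun z _ => Finset.mem_univ (f z))).symm
    have hsplit : ∑ b : β, (univ.filter (fun z => f z = b)).card = ∑ b ∈ T, c := by
      rw [Finset.sum_filter]
      refine Finset.sum_congr rfl fun b _ => ?_
      rcases hfib b with h | h
      · rw [h, if_neg (by omega)]
      · rw [h]; simp
    rw [hsplit, Finset.sum_const, smul_eq_mul] at hpart
    have : c * T.card = c * m := by rw [mul_comm T.card c] at hpart; omega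
    exact Nat.eq_of_mul_eq_mul_left hc this
  rw [distEnt]
  have hterm : ∀ b : β, (∑ z ∈ univ.filter (fun z => f z = b), (1 : ℝ) / (Fintype.card α)) *
      Real.logb 2 (∑ z ∈ univ.filter (fun z => f z = b), (1 : ℝ) / (Fintype.card α))
      = if b ∈ T then (1/(m:ℝ)) * Real.logb 2 (1/(m:ℝ)) else 0 := by
    intro b
    rw [hP]
    rcases hfib b with h | h
    · have hb : b ∉ T := by
        simp only [hT, Finset.mem_filter, Finset.mem_univ, true_and, h]
        omega
      rw [if_neg hb, h]
      simp
    · have hb : b ∈ T := by simp only [hT, Finset.mem_filter, Finset.mem_univ, true_and, h]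
      rw [if_pos hb, h]
      have : ((c:ℝ)) / (Fintype.card α) = 1 / (m:ℝ) := by
        rw [← hcm]
        push_cast
        have hc' : ((c:ℝ)) ≠ 0 := Nat.cast_ne_zero.mpr hc.ne'
        have hm' : ((m:ℝ)) ≠ 0 := Nat.cast_ne_zero.mpr hm.ne'
        field_simp
      rw [this]
  rw [Finset.sum_congr rfl (fun b _ => hterm b), Finset.sum_ite_mem, Finset.univ_inter,
    Finset.sum_const, hTcard, nsmul_eq_mul]
  have hm' : ((m:ℝ)) ≠ 0 := Nat.cast_ne_zero.mpr hm.ne'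
  rw [one_div, Real.logb_inv]
  field_simp

-- fibers of an additive map between fintypes: empty or same card as the zero fiber
private lemma fiber_card_lin {V M : Type*} [AddCommGroup V] [Fintype V] [DecidableEq V]
    [AddCommGroup M] [DecidableEq M] (f : V → M) (hf : ∀ x y, f (x - y) = f x - f y) (b : M) :
    ((univ : Finset V).filter (fun z => f z = b)).card = 0 ∨
    ((univ : Finset V).filter (fun z => f z = b)).card
      = ((univ : Finset V).filter (fun z => f z = 0)).card := by
  by_cases h : ∃ z₀, f z₀ = b
  · right
    obtain ⟨z₀, hz₀⟩ := h
    refine Finset.card_nbij' (fun z => z - z₀) (fun z => z + z₀) ?_ ?_ ?_ ?_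
    · intro a ha
      simp only [Finset.coe_filter, Set.mem_setOf_eq, Finset.mem_filter, Finset.mem_univ, true_and] at ha ⊢
      rw [hf, ha, hz₀, sub_self]
    · intro a ha
      simp only [Finset.coe_filter, Set.mem_setOf_eq, Finset.mem_filter, Finset.mem_univ, true_and] at ha ⊢
      have : f (a + z₀) - f z₀ = 0 := by rw [← hf]; simpa using ha
      have h2 : f (a + z₀) = f z₀ := by
        have := sub_eq_zero.mp this
        exact this
      rw [h2, hz₀]
    · intro a _; simp
    · intro a _; simp
  · left
    rw [Finset.card_eq_zero, Finset.filter_eq_empty_iff]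
    intro z _
    exact fun hz => h ⟨z, hz⟩

private lemma natcard_submodule {V : Type*} [AddCommGroup V] [Module (ZMod 2) V] [Fintype V]
    (S : Submodule (ZMod 2) V) :
    Nat.card S = 2 ^ Module.finrank (ZMod 2) S := by
  haveI : Fintype S := Fintype.ofFinite _
  rw [Nat.card_eq_fintype_card]
  have := Module.card_eq_pow_finrank (K := ZMod 2) (V := S)
  rwa [ZMod.card] at this

private lemma card_filter_eq_pow {V : Type*} [AddCommGroup V] [Module (ZMod 2) V] [Fintype V]
    [DecidableEq V] (S : Submodule (ZMod 2) V) (P : V → Prop) [DecidablePred P]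
    (hP : ∀ z, P z ↔ z ∈ S) :
    ((univ : Finset V).filter P).card = 2 ^ Module.finrank (ZMod 2) S := by
  have h1 : ((univ : Finset V).filter P).card = Nat.card {z : V // P z} := by
    rw [Nat.card_eq_fintype_card, Fintype.card_subtype]
  rw [h1, ← natcard_submodule S]
  exact Nat.card_congr (Equiv.subtypeEquivRight hP)

private lemma logb_two_pow (n : ℕ) : Real.logb 2 ((2 ^ n : ℕ) : ℝ) = n := by
  push_cast
  rw [Real.logb_pow]
  simp

set_option maxHeartbeats 1000000 in
set_option synthInstance.maxHeartbeats 400000 in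
/-- for every distribution of `Z` on `GF(2)^k`,
`H(AZ | BZ) ≤ rank [A;B] − rank B`, with equality for uniform `Z`; hence the
maximum over all distributions equals `rank [A;B] − rank B`. -/
theorem stmt_3 {p r k : ℕ} (A : Matrix (Fin p) (Fin k) (ZMod 2))
    (B : Matrix (Fin r) (Fin k) (ZMod 2)) :
    (∀ μ : (Fin k → ZMod 2) → ℝ, (∀ z, 0 ≤ μ z) → (∑ z, μ z) = 1 →
        condEnt μ (fun z => A.mulVec z) (fun z => B.mulVec z)
          ≤ ((Matrix.fromRows A B).rank : ℝ) - (B.rank : ℝ)) ∧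
    condEnt (fun _ : Fin k → ZMod 2 => (1 : ℝ) / Fintype.card (Fin k → ZMod 2))
        (fun z => A.mulVec z) (fun z => B.mulVec z)
      = ((Matrix.fromRows A B).rank : ℝ) - (B.rank : ℝ) ∧
    IsGreatest {h : ℝ | ∃ μ : (Fin k → ZMod 2) → ℝ, (∀ z, 0 ≤ μ z) ∧ (∑ z, μ z) = 1 ∧
        h = condEnt μ (fun z => A.mulVec z) (fun z => B.mulVec z)}
      (((Matrix.fromRows A B).rank : ℝ) - (B.rank : ℝ)) := by
  classical
  have hfin : Fintype.card (Fin k → ZMod 2) = 2 ^ k := by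
    have := Module.card_eq_pow_finrank (K := ZMod 2) (V := Fin k → ZMod 2)
    rwa [ZMod.card, Module.finrank_fin_fun] at this
  set LA := A.mulVecLin with hLA
  set LB := B.mulVecLin with hLB
  set J := LA.prod LB with hJ
  set LR := (Matrix.fromRows A B).mulVecLin with hLR
  have hkerJ : LinearMap.ker J = LinearMap.ker LR := by
    ext z
    simp only [LinearMap.mem_ker, hJ, LinearMap.prod_apply, Function.prod, hLA, hLB, hLR,
      Matrix.mulVecLin_apply, Matrix.fromRows_mulVec, Prod.mk_eq_zero]
    constructor
    · rintro ⟨h1, h2⟩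
      funext i
      cases i with
      | inl i => simpa using congrFun h1 i
      | inr i => simpa using congrFun h2 i
    · intro h
      constructor
      · funext i; simpa using congrFun h (Sum.inl i)
      · funext i; simpa using congrFun h (Sum.inr i)
  have hfinrank : Module.finrank (ZMod 2) (Fin k → ZMod 2) = k :=
    Module.finrank_fin_fun (ZMod 2)
  have hRN_J := LinearMap.finrank_range_add_finrank_ker J
  have hRN_R := LinearMap.finrank_range_add_finrank_ker LR
  have hRN_B := LinearMap.finrank_range_add_finrank_ker LB
  rw [hfinrank] at hRN_J hRN_B hRN_R
  have hrankR : (Matrix.fromRows A B).rank = Module.finrank (ZMod 2) (LinearMap.range LR) := rfl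
  have hrankB : B.rank = Module.finrank (ZMod 2) (LinearMap.range LB) := rfl
  have hrangeJ : Module.finrank (ZMod 2) (LinearMap.range J) = (Matrix.fromRows A B).rank := by
    rw [hrankR]
    rw [hkerJ] at hRN_J
    omega
  -- the restriction of A to ker B
  set φ : (LinearMap.ker LB) →ₗ[ZMod 2] (Fin p → ZMod 2) :=
    LA.comp (LinearMap.ker LB).subtype with hφ
  have hRN_φ := LinearMap.finrank_range_add_finrank_ker φ
  have hkerφ : Module.finrank (ZMod 2) (LinearMap.ker φ)
      = Module.finrank (ZMod 2) (LinearMap.ker J) := by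
    have h1 : LinearMap.ker J = LinearMap.ker LA ⊓ LinearMap.ker LB := LinearMap.ker_prod LA LB
    have h2 : LinearMap.ker φ
        = Submodule.comap (LinearMap.ker LB).subtype (LinearMap.ker LA) :=
      LinearMap.ker_comp _ _
    have e := Submodule.comapSubtypeEquivOfLe
      (inf_le_right : LinearMap.ker LA ⊓ LinearMap.ker LB ≤ LinearMap.ker LB)
    have h3 : Submodule.comap (LinearMap.ker LB).subtype (LinearMap.ker LA ⊓ LinearMap.ker LB)
        = Submodule.comap (LinearMap.ker LB).subtype (LinearMap.ker LA) := by
      rw [Submodule.comap_inf, Submodule.comap_subtype_self, inf_top_eq]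
    have e2 : Module.finrank (ZMod 2)
        ↥(Submodule.comap (LinearMap.ker LB).subtype (LinearMap.ker LA ⊓ LinearMap.ker LB))
        = Module.finrank (ZMod 2) ↥(LinearMap.ker LA ⊓ LinearMap.ker LB) := e.finrank_eq
    rw [h3] at e2
    rw [h2, e2, h1]
  set dphi := Module.finrank (ZMod 2) (LinearMap.range φ) with hdphi
  have hkey : dphi + B.rank = (Matrix.fromRows A B).rank := by
    rw [hrankB, ← hrangeJ]
    omega
  set N := 2 ^ dphi with hNdef
  haveI : Fintype ↥(LinearMap.range φ) := Fintype.ofFinite _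
  have hNcard : Nat.card ↥(LinearMap.range φ) = N := natcard_submodule _
  have hfib : ∀ c : Fin r → ZMod 2, ∃ t : Finset (Fin p → ZMod 2), t.card ≤ N ∧
      ∀ b, (∃ z, A.mulVec z = b ∧ B.mulVec z = c) → b ∈ t := by
    intro c
    by_cases hex : ∃ z₀, B.mulVec z₀ = c
    · obtain ⟨z₀, hz₀⟩ := hex
      refine ⟨Finset.image (fun v : ↥(LinearMap.range φ) => A.mulVec z₀ + ↑v) univ, ?_, ?_⟩
      · calc (Finset.image (fun v : ↥(LinearMap.range φ) => A.mulVec z₀ + ↑v) univ).card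
            ≤ (univ : Finset ↥(LinearMap.range φ)).card := Finset.card_image_le
          _ = N := by rw [Finset.card_univ, ← Nat.card_eq_fintype_card, hNcard]
      · rintro b ⟨z, hzA, hzB⟩
        have hker : z - z₀ ∈ LinearMap.ker LB := by
          rw [LinearMap.mem_ker, map_sub]
          simp only [hLB, Matrix.mulVecLin_apply, hzB, hz₀, sub_self]
        have hmem : b - A.mulVec z₀ ∈ LinearMap.range φ := by
          refine ⟨⟨z - z₀, hker⟩, ?_⟩
          simp only [hφ, LinearMap.comp_apply, Submodule.subtype_apply, hLA,
            Matrix.mulVecLin_apply, map_sub]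
          rw [hzA]
        refine Finset.mem_image.mpr ⟨⟨b - A.mulVec z₀, hmem⟩, Finset.mem_univ _, ?_⟩
        simp
    · exact ⟨∅, by simp, fun b hb => absurd ⟨hb.choose, hb.choose_spec.2⟩ hex⟩
  have hlogbN : Real.logb 2 (N : ℝ) = ((Matrix.fromRows A B).rank : ℝ) - (B.rank : ℝ) := by
    rw [hNdef, logb_two_pow, ← hkey]
    push_cast
    ring
  have part1 : ∀ μ : (Fin k → ZMod 2) → ℝ, (∀ z, 0 ≤ μ z) → (∑ z, μ z) = 1 →
      condEnt μ (fun z => A.mulVec z) (fun z => B.mulVec z)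
        ≤ ((Matrix.fromRows A B).rank : ℝ) - (B.rank : ℝ) := by
    intro μ hμ0 hμ1
    have := condEnt_le_logb μ hμ0 hμ1 (fun z => A.mulVec z) (fun z => B.mulVec z) N hfib
    rwa [hlogbN] at this
  -- uniform distribution part
  have part2 : condEnt (fun _ : Fin k → ZMod 2 => (1 : ℝ) / Fintype.card (Fin k → ZMod 2))
      (fun z => A.mulVec z) (fun z => B.mulVec z)
      = ((Matrix.fromRows A B).rank : ℝ) - (B.rank : ℝ) := by
    have hJoint := distEnt_uniform_fibers
      (f := fun z : Fin k → ZMod 2 => (A.mulVec z, B.mulVec z))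
      (c := 2 ^ Module.finrank (ZMod 2) (LinearMap.ker J))
      (m := 2 ^ Module.finrank (ZMod 2) (LinearMap.range J))
      (Nat.two_pow_pos _) (Nat.two_pow_pos _)
      (by rw [← pow_add, hfin]; congr 1; omega)
      (by
        intro b
        have hsub : ∀ x y : Fin k → ZMod 2,
            ((A.mulVec (x - y), B.mulVec (x - y)) : (Fin p → ZMod 2) × (Fin r → ZMod 2))
              = (A.mulVec x, B.mulVec x) - (A.mulVec y, B.mulVec y) := by
          intro x y
          have h1 := map_sub A.mulVecLin x y
          have h2 := map_sub B.mulVecLin x y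
          simp only [Matrix.mulVecLin_apply] at h1 h2
          simp [Prod.ext_iff, h1, h2]
        rcases fiber_card_lin (fun z : Fin k → ZMod 2 => (A.mulVec z, B.mulVec z)) hsub b with
          h | h
        · exact Or.inl h
        · right
          rw [h]
          exact card_filter_eq_pow (LinearMap.ker J) _ (fun z => by
            simp [LinearMap.mem_ker, hJ, LinearMap.prod_apply, Function.prod, hLA, hLB,
              Matrix.mulVecLin_apply, Prod.ext_iff]))
    have hB := distEnt_uniform_fibers
      (f := fun z : Fin k → ZMod 2 => B.mulVec z)
      (c := 2 ^ Module.finrank (ZMod 2) (LinearMap.ker LB))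
      (m := 2 ^ Module.finrank (ZMod 2) (LinearMap.range LB))
      (Nat.two_pow_pos _) (Nat.two_pow_pos _)
      (by rw [← pow_add, hfin]; congr 1; omega)
      (by
        intro b
        have hsub : ∀ x y : Fin k → ZMod 2, B.mulVec (x - y) = B.mulVec x - B.mulVec y := by
          intro x y
          have h2 := map_sub B.mulVecLin x y
          simpa only [Matrix.mulVecLin_apply] using h2
        rcases fiber_card_lin (fun z : Fin k → ZMod 2 => B.mulVec z) hsub b with h | h
        · exact Or.inl h
        · right
          rw [h]
          exact card_filter_eq_pow (LinearMap.ker LB) _ (fun z => by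
            simp [LinearMap.mem_ker, hLB, Matrix.mulVecLin_apply]))
    rw [condEnt]
    have hfunext : (fun z : Fin k → ZMod 2 =>
        ((fun z => A.mulVec z) z, (fun z => B.mulVec z) z))
        = fun z : Fin k → ZMod 2 => (A.mulVec z, B.mulVec z) := rfl
    rw [hfunext, hJoint, hB, logb_two_pow, logb_two_pow, hrangeJ, ← hrankB]
  refine ⟨part1, part2, ?_⟩
  constructor
  · refine ⟨fun _ => (1 : ℝ) / Fintype.card (Fin k → ZMod 2), fun z => by positivity, ?_,
      part2.symm⟩
    rw [Finset.sum_const, nsmul_eq_mul, Finset.card_univ]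
    have : (0:ℝ) < Fintype.card (Fin k → ZMod 2) := by
      exact_mod_cast Fintype.card_pos
    field_simp
  · rintro h ⟨μ, h0, h1, rfl⟩
    exact part1 μ h0 h1
end

section
/- For all real h₁, g₁ with h₁² + g₁² > 0 and all real β with 0 ≤ β² ≤ 1: (1/2)·log₂((2(h₁²+g₁²)+1)/(2β²(h₁²+g₁²)+1)) − (1/2)·log₂((1+h₁²+g₁²)/(1+β²(h₁²+g₁²))) ≤ 1/2. -/
theorem stmt_9 (h₁ g₁ β : ℝ) (hpos : h₁^2 + g₁^2 > 0) (hβ : β^2 ≤ 1) :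
    (1/2) * Real.logb 2 ((2*(h₁^2 + g₁^2) + 1) / (2*β^2*(h₁^2 + g₁^2) + 1))
      - (1/2) * Real.logb 2 ((1 + h₁^2 + g₁^2) / (1 + β^2*(h₁^2 + g₁^2))) ≤ 1/2 := by
  set s := h₁^2 + g₁^2 with hs
  have hb : (0:ℝ) ≤ β^2 := sq_nonneg β
  have h1 : (0:ℝ) < 2*β^2*s + 1 := by nlinarith
  have h2 : (0:ℝ) < 1 + β^2*s := by nlinarith
  have h3 : (0:ℝ) < 2*s + 1 := by nlinarith
  have h4 : (0:ℝ) < 1 + s := by nlinarith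
  have hA : (0:ℝ) < (2*s + 1) / (2*β^2*s + 1) := div_pos h3 h1
  have hB : (0:ℝ) < (1 + s) / (1 + β^2*s) := div_pos h4 h2
  have key : (2*s + 1) / (2*β^2*s + 1) ≤ 2 * ((1 + s) / (1 + β^2*s)) := by
    rw [mul_div_assoc' 2, div_le_div_iff₀ h1 h2]
    nlinarith [mul_nonneg (mul_nonneg hb hpos.le) hpos.le, mul_nonneg hb hpos.le]
  have hlog : Real.logb 2 ((2*s + 1) / (2*β^2*s + 1))
      ≤ Real.logb 2 (2 * ((1 + s) / (1 + β^2*s))) :=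
    Real.logb_le_logb_of_le (by norm_num) hA key
  rw [Real.logb_mul (by norm_num) (ne_of_gt hB)] at hlog
  have h22 : Real.logb 2 2 = 1 := Real.logb_self_eq_one (by norm_num)
  have hgoal : 1 + h₁^2 + g₁^2 = 1 + s := by rw [hs]; ring
  rw [hgoal]
  linarith
end

section
/- For all real h₁ with h₁² ≥ 1 and all real g₁: (1/2)·log₂(1+h₁²) − (1/2)·log₂((1+h₁²+g₁²)·h₁²/(h₁²+g₁²)) ≤ 1/2. -/
theorem stmt_10 (h₁ g₁ : ℝ) (hh : h₁^2 ≥ 1) :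
    (1/2) * Real.logb 2 (1 + h₁^2)
      - (1/2) * Real.logb 2 ((1 + h₁^2 + g₁^2) * h₁^2 / (h₁^2 + g₁^2)) ≤ 1/2 := by
  have hg : g₁^2 ≥ 0 := sq_nonneg _
  have hpos : (0:ℝ) < h₁^2 := lt_of_lt_of_le one_pos hh
  have hden : (0:ℝ) < h₁^2 + g₁^2 := by positivity
  set A := 1 + h₁^2 with hA
  set B := (1 + h₁^2 + g₁^2) * h₁^2 / (h₁^2 + g₁^2) with hB
  have hApos : 0 < A := by positivity
  have hBpos : 0 < B := by positivity
  have hAle : A ≤ 2 * B := by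
    rw [hA, hB, ← mul_div_assoc, le_div_iff₀ hden]
    nlinarith [sq_nonneg g₁, mul_nonneg hg (sub_nonneg.mpr hh)]
  have h1 : Real.logb 2 A ≤ Real.logb 2 (2 * B) :=
    (Real.logb_le_logb (b := 2) (by norm_num) hApos (by positivity)).mpr hAle
  rw [Real.logb_mul (by norm_num) (ne_of_gt hBpos)] at h1
  have h2 : Real.logb 2 2 = 1 := by simp
  linarith [h1, h2]
end

section
/- Let h₁, g₁ be real numbers and 0 ≤ β² ≤ 1. Define a = (1/2)log₂(1+h₁²), b = (1/2)log₂((2(h₁²+g₁²)+1)/(2β²(h₁²+g₁²)+1)), c = (1/2)log₂((1+h₁²+g₁²)h₁²/(h₁²+g₁²)), d = (1/2)log₂((1+h₁²+g₁²)/(1+β²(h₁²+g₁²))). Assume h₁ ≠ 0 (so h₁²+g₁² > 0). Then min{a, b} − max(0, min{c, d}) ≤ 1/2. -/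
lemma aux_logb (x y : ℝ) (hx : 0 < x) (hxy : x ≤ 2*y) :
    Real.logb 2 x ≤ 1 + Real.logb 2 y := by
  have hy : 0 < y := by linarith
  calc Real.logb 2 x ≤ Real.logb 2 (2*y) :=
        Real.logb_le_logb_of_le (by norm_num) hx hxy
    _ = Real.logb 2 2 + Real.logb 2 y :=
        Real.logb_mul (by norm_num) (ne_of_gt hy)
    _ = 1 + Real.logb 2 y := by rw [Real.logb_self_eq_one (by norm_num)]

theorem stmt_12 (h₁ g₁ β : ℝ) (hβ : β^2 ≤ 1) (hh : h₁ ≠ 0) :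
    min ((1/2) * Real.logb 2 (1 + h₁^2))
        ((1/2) * Real.logb 2 ((2*(h₁^2 + g₁^2) + 1) / (2*β^2*(h₁^2 + g₁^2) + 1)))
      - max 0 (min ((1/2) * Real.logb 2 ((1 + h₁^2 + g₁^2) * h₁^2 / (h₁^2 + g₁^2)))
               ((1/2) * Real.logb 2 ((1 + h₁^2 + g₁^2) / (1 + β^2*(h₁^2 + g₁^2)))))
      ≤ 1/2 := by
  have hh2 : 0 < h₁^2 := by positivity
  have hg2 : 0 ≤ g₁^2 := sq_nonneg _
  have hs : 0 ≤ β^2 := sq_nonneg _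
  have hP : 0 < h₁^2 + g₁^2 := by linarith
  set a := (1/2) * Real.logb 2 (1 + h₁^2) with ha
  set b := (1/2) * Real.logb 2 ((2*(h₁^2 + g₁^2) + 1) / (2*β^2*(h₁^2 + g₁^2) + 1)) with hb
  set c := (1/2) * Real.logb 2 ((1 + h₁^2 + g₁^2) * h₁^2 / (h₁^2 + g₁^2)) with hc
  set d := (1/2) * Real.logb 2 ((1 + h₁^2 + g₁^2) / (1 + β^2*(h₁^2 + g₁^2))) with hd
  rcases le_or_gt (h₁^2) 1 with hcase | hcase
  · -- a ≤ 1/2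
    have h1 : Real.logb 2 (1 + h₁^2) ≤ 1 := by
      calc Real.logb 2 (1 + h₁^2) ≤ Real.logb 2 2 :=
            Real.logb_le_logb_of_le (by norm_num) (by linarith) (by linarith)
        _ = 1 := Real.logb_self_eq_one (by norm_num)
    have : min a b ≤ a := min_le_left _ _
    have h0 : (0:ℝ) ≤ max 0 (min c d) := le_max_left _ _
    have : a ≤ 1/2 := by rw [ha]; linarith
    linarith
  · -- h₁^2 ≥ 1 case
    have hac : a ≤ c + 1/2 := by
      have hineq : 1 + h₁^2 ≤ 2 * ((1 + h₁^2 + g₁^2) * h₁^2 / (h₁^2 + g₁^2)) := by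
        rw [mul_div_assoc', le_div_iff₀ hP]
        nlinarith
      have := aux_logb _ _ (by linarith) hineq
      rw [ha, hc]; linarith
    have hbd : b ≤ d + 1/2 := by
      have hden1 : (0:ℝ) < 2*β^2*(h₁^2 + g₁^2) + 1 := by positivity
      have hden2 : (0:ℝ) < 1 + β^2*(h₁^2 + g₁^2) := by positivity
      have hineq : (2*(h₁^2 + g₁^2) + 1) / (2*β^2*(h₁^2 + g₁^2) + 1)
          ≤ 2 * ((1 + h₁^2 + g₁^2) / (1 + β^2*(h₁^2 + g₁^2))) := by
        rw [mul_div_assoc', div_le_div_iff₀ hden1 hden2]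
        nlinarith [mul_nonneg hs (sq_nonneg (h₁^2 + g₁^2))]
      have hpos : 0 < (2*(h₁^2 + g₁^2) + 1) / (2*β^2*(h₁^2 + g₁^2) + 1) := by positivity
      have := aux_logb _ _ hpos hineq
      rw [hb, hd]; linarith
    have hmin : min a b ≤ min c d + 1/2 := by
      rcases le_total c d with h | h
      · calc min a b ≤ a := min_le_left _ _
          _ ≤ min c d + 1/2 := by rw [min_eq_left h]; exact hac
      · calc min a b ≤ b := min_le_right _ _
          _ ≤ min c d + 1/2 := by rw [min_eq_right h]; exact hbd
    have : min c d ≤ max 0 (min c d) := le_max_right _ _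
    linarith
end
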